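/- Let F_n = L_n^3 - 7L_n + 8(n+2) with L_n = 3 + Binomial(n-1,p), 0 < p < 1. Then for every r > 0, F_n / n^3 converges to p^3 in L^r as n → ∞. -/

import Mathlib

open Filter MeasureTheory Asymptotics Topology

/-- Expectation of `f` under a Binomial(m, p) distribution, as a finite sum. -/
noncomputable def binExp (m : ℕ) (p : ℝ) (f : ℕ → ℝ) : ℝ :=
  ∑ k ∈ Finset.range (m+1), (m.choose k : ℝ) * p^k * (1-p)^(m-k) * f k

/-- Variance of `f` under a Binomial(m, p) distribution. -/
noncomputable def binVar (m : ℕ) (p : ℝ) (f : ℕ → ℝ) : ℝ :=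
  binExp m p (fun k => (f k - binExp m p f)^2)

/-- The binomial weight. -/
noncomputable def binWt (m : ℕ) (p : ℝ) (k : ℕ) : ℝ := (m.choose k : ℝ) * p^k * (1-p)^(m-k)

lemma binWt_sum (m : ℕ) (p : ℝ) : ∑ k ∈ Finset.range (m+1), binWt m p k = 1 := by
  have h := add_pow p (1-p) m
  simp only [add_sub_cancel, one_pow] at h
  rw [h]
  exact Finset.sum_congr rfl fun k _ => by unfold binWt; ring

lemma binWt_var (m : ℕ) (p : ℝ) :
    ∑ k ∈ Finset.range (m+1), ((k:ℝ) - m*p)^2 * binWt m p k = m * p * (1-p) := by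
  have h := congrArg (Polynomial.eval p) (bernsteinPolynomial.variance ℝ m)
  simp only [Polynomial.eval_finset_sum, Polynomial.eval_mul, Polynomial.eval_pow,
    Polynomial.eval_sub, Polynomial.eval_smul, Polynomial.eval_X, Polynomial.eval_natCast,
    Polynomial.eval_one, bernsteinPolynomial, nsmul_eq_mul, smul_eq_mul] at h
  rw [← h]
  exact Finset.sum_congr rfl fun k _ => by unfold binWt; ring

lemma binWt_nonneg (m : ℕ) (p : ℝ) (hp0 : 0 ≤ p) (hp1 : p ≤ 1) (k : ℕ) : 0 ≤ binWt m p k := by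
  unfold binWt
  have : (0:ℝ) ≤ 1 - p := by linarith
  positivity

lemma binExp_nonneg (m : ℕ) (p : ℝ) (hp0 : 0 ≤ p) (hp1 : p ≤ 1) (f : ℕ → ℝ)
    (hf : ∀ k, 0 ≤ f k) : 0 ≤ binExp m p f :=
  Finset.sum_nonneg fun k _ => mul_nonneg (binWt_nonneg m p hp0 hp1 k) (hf k)

/-- Chebyshev-type bound for the binomial expectation of a nonnegative function. -/
lemma binExp_cheby (m : ℕ) (p : ℝ) (hp0 : 0 ≤ p) (hp1 : p ≤ 1)
    (h : ℕ → ℝ) (hpos : ∀ k, 0 ≤ h k) (B ε t : ℝ) (ht : 0 < t) (hε : 0 ≤ ε)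
    (hB : ∀ k ≤ m, h k ≤ B)
    (hgood : ∀ k ≤ m, |(k:ℝ) - m*p| ≤ t → h k ≤ ε) :
    binExp m p h ≤ ε + B * ((m:ℝ) * p * (1-p)) / t^2 := by
  have hB0 : 0 ≤ B := le_trans (hpos 0) (hB 0 (Nat.zero_le m))
  have hbe : binExp m p h = ∑ k ∈ Finset.range (m+1), binWt m p k * h k :=
    Finset.sum_congr rfl fun k _ => by unfold binWt; ring
  have hterm : ∀ k ∈ Finset.range (m+1),
      binWt m p k * h k ≤ ε * binWt m p k + (B/t^2) * (((k:ℝ) - m*p)^2 * binWt m p k) := by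
    intro k hk
    have hkm : k ≤ m := Nat.lt_succ_iff.mp (Finset.mem_range.mp hk)
    have hw := binWt_nonneg m p hp0 hp1 k
    have hc : 0 ≤ B / t^2 := div_nonneg hB0 (sq_nonneg t)
    rcases le_or_gt |(k:ℝ) - m*p| t with hle | hgt
    · have h1 : binWt m p k * h k ≤ ε * binWt m p k := by
        rw [mul_comm]
        exact mul_le_mul_of_nonneg_right (hgood k hkm hle) hw
      have h2 : 0 ≤ (B/t^2) * (((k:ℝ) - m*p)^2 * binWt m p k) := by positivity
      linarith
    · have ht2 : t^2 ≤ ((k:ℝ) - m*p)^2 := by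
        have := sq_abs ((k:ℝ) - m*p)
        nlinarith [abs_nonneg ((k:ℝ) - m*p)]
      have h1 : binWt m p k * h k ≤ B * binWt m p k := by
        rw [mul_comm]
        exact mul_le_mul_of_nonneg_right (hB k hkm) hw
      have h2 : B * binWt m p k ≤ (B/t^2) * (((k:ℝ) - m*p)^2 * binWt m p k) := by
        have e : B * binWt m p k = (B/t^2) * (t^2 * binWt m p k) := by
          field_simp
        rw [e]
        exact mul_le_mul_of_nonneg_left (mul_le_mul_of_nonneg_right ht2 hw) hc
      have h3 : 0 ≤ ε * binWt m p k := mul_nonneg hε hw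
      linarith
  calc binExp m p h = ∑ k ∈ Finset.range (m+1), binWt m p k * h k := hbe
    _ ≤ ∑ k ∈ Finset.range (m+1),
        (ε * binWt m p k + (B/t^2) * (((k:ℝ) - m*p)^2 * binWt m p k)) := Finset.sum_le_sum hterm
    _ = ε * (∑ k ∈ Finset.range (m+1), binWt m p k)
        + (B/t^2) * ∑ k ∈ Finset.range (m+1), ((k:ℝ) - m*p)^2 * binWt m p k := by
        rw [Finset.sum_add_distrib, ← Finset.mul_sum, ← Finset.mul_sum]
    _ = ε + B * ((m:ℝ) * p * (1-p)) / t^2 := by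
        rw [binWt_sum, binWt_var]; ring

/-- Deterministic pointwise estimate. -/
lemma forgotten_core (p K N s : ℝ) (hp0 : 0 ≤ p) (hp1 : p ≤ 1) (hN : 1 ≤ N)
    (hK0 : 0 ≤ K) (hk : K ≤ N) (hs : |K - (N-1)*p| ≤ s) :
    |((K + 3) ^ 3 - 7 * (K + 3) + 8 * (N + 2)) / N^3 - p^3| ≤ (3*s + 62)/N := by
  have hN0 : (0:ℝ) < N := by linarith
  have hs0 : 0 ≤ s := le_trans (abs_nonneg _) hs
  have e1 : ((K + 3) ^ 3 - 7 * (K + 3) + 8 * (N + 2)) / N^3 - p^3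
      = ((K/N)^3 - p^3) + (9*K^2 + 20*K + 8*N + 22)/N^3 := by
    field_simp
    ring
  rw [e1]
  have hKN0 : 0 ≤ K/N := by positivity
  have hKN1 : K/N ≤ 1 := by rw [div_le_one hN0]; exact hk
  have h1 : |(K/N)^3 - p^3| ≤ 3 * ((s+1)/N) := by
    have e2 : (K/N)^3 - p^3 = (K/N - p) * ((K/N)^2 + (K/N)*p + p^2) := by ring
    rw [e2, abs_mul]
    have h3 : |(K/N)^2 + (K/N)*p + p^2| ≤ 3 := by
      rw [abs_of_nonneg (by positivity)]
      nlinarith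
    have h4 : |K/N - p| ≤ (s+1)/N := by
      have e3 : K/N - p = (K - (N-1)*p - p)/N := by field_simp; ring
      rw [e3, abs_div, abs_of_pos hN0]
      rw [div_le_div_iff_of_pos_right hN0]
      calc |K - (N-1)*p - p| ≤ |K - (N-1)*p| + |p| := abs_sub _ _
        _ ≤ s + 1 := by rw [abs_of_nonneg hp0]; linarith
    calc |K/N - p| * |(K/N)^2 + (K/N)*p + p^2| ≤ ((s+1)/N) * 3 :=
          mul_le_mul h4 h3 (abs_nonneg _) (div_nonneg (by linarith) hN0.le)
      _ = 3 * ((s+1)/N) := by ring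
  have h2 : |(9*K^2 + 20*K + 8*N + 22)/N^3| ≤ 59/N := by
    rw [abs_of_nonneg (div_nonneg (by nlinarith [sq_nonneg K]) (by positivity)),
      div_le_div_iff₀ (by positivity) hN0]
    nlinarith [mul_le_mul_of_nonneg_right (mul_self_le_mul_self hK0 hk) hN0.le,
      mul_le_mul_of_nonneg_right hk hN0.le]
  calc |((K/N)^3 - p^3) + (9*K^2 + 20*K + 8*N + 22)/N^3|
      ≤ |(K/N)^3 - p^3| + |(9*K^2 + 20*K + 8*N + 22)/N^3| := abs_add_le _ _
    _ ≤ 3 * ((s+1)/N) + 59/N := add_le_add h1 h2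
    _ = (3*s + 62)/N := by field_simp; ring

/-- F_n / n³ → p³ in L^r for every r > 0. -/
theorem stmt16 (p : ℝ) (hp0 : 0 < p) (hp1 : p < 1) (r : ℝ) (hr : 0 < r) :
    Filter.Tendsto (fun n : ℕ =>
      binExp (n-1) p (fun k => |(((k : ℝ) + 3) ^ 3 - 7 * ((k : ℝ) + 3) + 8 * ((n : ℝ) + 2)) / (n : ℝ)^3 - p^3| ^ r))
      Filter.atTop (𝓝 0) := by
  have hp0' : (0:ℝ) ≤ p := hp0.le
  have hp1' : p ≤ 1 := hp1.le
  set b : ℕ → ℝ := fun n => (65 * (n:ℝ) ^ (-(1:ℝ)/4)) ^ r + 65 ^ r * (n:ℝ) ^ (-(1:ℝ)/2) with hbdef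
  have t14 : Tendsto (fun n : ℕ => (n:ℝ) ^ (-(1:ℝ)/4)) atTop (𝓝 0) := by
    have h1 := (tendsto_rpow_neg_atTop (show (0:ℝ) < 1/4 by norm_num)).comp
      (tendsto_natCast_atTop_atTop (R := ℝ))
    simpa [Function.comp_def, neg_div] using h1
  have t12 : Tendsto (fun n : ℕ => (n:ℝ) ^ (-(1:ℝ)/2)) atTop (𝓝 0) := by
    have h1 := (tendsto_rpow_neg_atTop (show (0:ℝ) < 1/2 by norm_num)).comp
      (tendsto_natCast_atTop_atTop (R := ℝ))
    simpa [Function.comp_def, neg_div] using h1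
  have hb0 : Tendsto b atTop (𝓝 0) := by
    have hA : Tendsto (fun n : ℕ => (65 * (n:ℝ) ^ (-(1:ℝ)/4)) ^ r) atTop (𝓝 0) := by
      have h2 : Tendsto (fun n : ℕ => 65 * (n:ℝ) ^ (-(1:ℝ)/4)) atTop (𝓝 0) := by
        simpa using t14.const_mul (65:ℝ)
      have h3 := h2.rpow_const (Or.inr hr.le)
      simpa [Real.zero_rpow hr.ne'] using h3
    have hB : Tendsto (fun n : ℕ => (65:ℝ) ^ r * (n:ℝ) ^ (-(1:ℝ)/2)) atTop (𝓝 0) := by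
      simpa using t12.const_mul ((65:ℝ) ^ r)
    simpa using hA.add hB
  apply tendsto_of_tendsto_of_tendsto_of_le_of_le' tendsto_const_nhds hb0
  · exact Eventually.of_forall fun n => binExp_nonneg _ _ hp0' hp1' _
      (fun k => Real.rpow_nonneg (abs_nonneg _) r)
  · filter_upwards [eventually_ge_atTop 1] with n hn1
    have hN1 : (1:ℝ) ≤ (n:ℝ) := by exact_mod_cast hn1
    have hN0 : (0:ℝ) < (n:ℝ) := by linarith
    have hmcast : ((n-1:ℕ):ℝ) = (n:ℝ) - 1 := by
      rw [Nat.cast_sub hn1, Nat.cast_one]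
    have hmN : ((n-1:ℕ):ℝ) ≤ (n:ℝ) := by rw [hmcast]; linarith
    set t : ℝ := (n:ℝ) ^ ((3:ℝ)/4) with htdef
    have ht0 : 0 < t := Real.rpow_pos_of_pos hN0 _
    have ht1 : 1 ≤ t := by
      calc (1:ℝ) = 1 ^ ((3:ℝ)/4) := (Real.one_rpow _).symm
        _ ≤ t := Real.rpow_le_rpow zero_le_one hN1 (by norm_num)
    have hkcast : ∀ k : ℕ, k ≤ n - 1 → (k:ℝ) ≤ (n:ℝ) := by
      intro k hk
      calc (k:ℝ) ≤ ((n-1:ℕ):ℝ) := Nat.cast_le.mpr hk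
        _ ≤ (n:ℝ) := hmN
    have hbnd := binExp_cheby (n-1) p hp0' hp1'
      (fun k => |(((k : ℝ) + 3) ^ 3 - 7 * ((k : ℝ) + 3) + 8 * ((n : ℝ) + 2)) / (n : ℝ)^3 - p^3| ^ r)
      (fun k => Real.rpow_nonneg (abs_nonneg _) r)
      ((65:ℝ) ^ r) (((3*t + 62)/(n:ℝ)) ^ r) t ht0
      (Real.rpow_nonneg (div_nonneg (by linarith) hN0.le) r)
      (by
        intro k hk
        apply Real.rpow_le_rpow (abs_nonneg _) ?_ hr.le
        have hs : |(k:ℝ) - ((n:ℝ)-1)*p| ≤ (n:ℝ) := by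
          rw [abs_le]
          constructor
          · have h1 : ((n:ℝ)-1)*p ≤ (n:ℝ)-1 := by nlinarith
            have h2 : (0:ℝ) ≤ (k:ℝ) := Nat.cast_nonneg k
            linarith
          · have h1 : 0 ≤ ((n:ℝ)-1)*p := by nlinarith
            have := hkcast k hk
            linarith
        have := forgotten_core p (k:ℝ) (n:ℝ) (n:ℝ) hp0' hp1' hN1 (Nat.cast_nonneg k)
          (hkcast k hk) hs
        calc |(((k : ℝ) + 3) ^ 3 - 7 * ((k : ℝ) + 3) + 8 * ((n : ℝ) + 2)) / (n : ℝ)^3 - p^3|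
            ≤ (3*(n:ℝ) + 62)/(n:ℝ) := this
          _ ≤ 65 := by rw [div_le_iff₀ hN0]; linarith)
      (by
        intro k hk hclose
        apply Real.rpow_le_rpow (abs_nonneg _) ?_ hr.le
        rw [hmcast] at hclose
        exact forgotten_core p (k:ℝ) (n:ℝ) t hp0' hp1' hN1 (Nat.cast_nonneg k)
          (hkcast k hk) hclose)
    refine hbnd.trans (add_le_add ?_ ?_)
    · apply Real.rpow_le_rpow (div_nonneg (by linarith) hN0.le) ?_ hr.le
      have e1 : (n:ℝ) ^ (-(1:ℝ)/4) = t / (n:ℝ) := by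
        rw [show (-(1:ℝ)/4) = (3:ℝ)/4 - 1 by norm_num, Real.rpow_sub hN0, Real.rpow_one]
      rw [e1, mul_div_assoc']
      rw [div_le_div_iff_of_pos_right hN0]
      linarith
    · have ht2 : t^2 = (n:ℝ) ^ ((3:ℝ)/2) := by
        rw [pow_two, htdef, ← Real.rpow_add hN0]
        norm_num
      have e2 : (n:ℝ) ^ (-(1:ℝ)/2) = (n:ℝ) / t^2 := by
        rw [ht2, show (-(1:ℝ)/2) = 1 - (3:ℝ)/2 by norm_num, Real.rpow_sub hN0, Real.rpow_one]
      have hvar : ((n-1:ℕ):ℝ) * p * (1-p) ≤ (n:ℝ) := by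
        have hm0 : (0:ℝ) ≤ ((n-1:ℕ):ℝ) := Nat.cast_nonneg _
        have hpq : p*(1-p) ≤ 1 := by nlinarith
        calc ((n-1:ℕ):ℝ) * p * (1-p) = ((n-1:ℕ):ℝ) * (p*(1-p)) := by ring
          _ ≤ ((n-1:ℕ):ℝ) * 1 := mul_le_mul_of_nonneg_left hpq hm0
          _ = ((n-1:ℕ):ℝ) := mul_one _
          _ ≤ (n:ℝ) := hmN
      rw [e2, mul_div_assoc']
      rw [div_le_div_iff_of_pos_right (by positivity)]
      have h65 : (0:ℝ) ≤ (65:ℝ) ^ r := by positivity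
      calc (65:ℝ) ^ r * (((n-1:ℕ):ℝ) * p * (1-p)) ≤ (65:ℝ) ^ r * (n:ℝ) :=
        mul_le_mul_of_nonneg_left hvar h65
        _ = _ := rfl
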